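/- Let K be an infinite field of cardinality μ, let κ be a cardinal with 3 ≤ κ ≤ μ, and let V be a vector space over K with Module.rank K V = 2^μ. Then there exists a star-like family 𝓕 ⊆ V such that: (a) for every G ⊆ V with #G < κ there exists φ ∈ V with φ + G ⊆ 𝓕; (b) there exists a set I ⊆ V with #I = κ such that for every φ ∈ V, φ + I ⊄ 𝓕 (so the additivity of 𝓕 equals κ); and (c) 𝓕 is not 2-lineable: there is no K-linear subspace W of V with W ⊆ 𝓕 ∪ {0} and dim W = 2. -/

import Mathlib

open Cardinal

universe u

namespace StarLikeAux

variable (κ : Cardinal.{u})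

abbrev O := κ.ord.ToType

abbrev Tag := O κ × O κ

abbrev X := Tag κ ⊕ {q : Tag κ × Tag κ // q.1.1 ≠ q.2.1}

abbrev Y := Option (X κ)

/-- The "linked almost disjoint" family of subsets of `X κ`. -/
def A (t : Tag κ) : Set (X κ) := fun x =>
  match x with
  | Sum.inl s => s = t
  | Sum.inr q => q.val.1 = t ∨ q.val.2 = t

lemma inl_mem_A (t : Tag κ) : Sum.inl t ∈ A κ t := rfl

lemma A_eq_of_row_eq {t t' : Tag κ} {x : X κ} (hx : x ∈ A κ t) (hx' : x ∈ A κ t')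
    (hrow : t.1 = t'.1) : t = t' := by
  cases x with
  | inl s =>
    have h1 : s = t := hx
    have h2 : s = t' := hx'
    rw [← h1, ← h2]
  | inr q =>
    have h1 : q.val.1 = t ∨ q.val.2 = t := hx
    have h2 : q.val.1 = t' ∨ q.val.2 = t' := hx'
    rcases h1 with h1 | h1 <;> rcases h2 with h2 | h2
    · rw [← h1, ← h2]
    · rw [← h1, ← h2] at hrow; exact absurd hrow q.prop
    · rw [← h1, ← h2] at hrow; exact absurd hrow.symm q.prop
    · rw [← h1, ← h2]

lemma A_inter_nonempty {t t' : Tag κ} (h : t.1 ≠ t'.1) : (A κ t ∩ A κ t').Nonempty :=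
  ⟨Sum.inr ⟨(t, t'), h⟩, Or.inl rfl, Or.inr rfl⟩

variable (K : Type u) [Field K]

/-- The star-like family inside `Y κ → K`. -/
def Fbar : Set (Y κ → K) :=
  {f | f none ≠ 0 ∧ ∃ t : Tag κ, t.2 < t.1 ∧ ∀ x ∈ A κ t, f (some x) = f none}

end StarLikeAux

open StarLikeAux

/-- **Theorem.** Let `K` be an infinite field of cardinality `μ`, `κ` a cardinal with
`3 ≤ κ ≤ μ`, and `V` a `K`-vector space of dimension `2 ^ μ`. Then there is a star-like
family `𝓕 ⊆ V` whose additivity equals `κ` (every set of size `< κ` admits a translate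
into `𝓕`, while some set `I` of size `κ` admits none) and which is not `2`-lineable. -/
theorem exists_starLike_additivity_eq_not_two_lineable {K V : Type u} [Field K] [Infinite K]
    [AddCommGroup V] [Module K V] (κ : Cardinal.{u}) (hκ3 : 3 ≤ κ) (hκμ : κ ≤ #K)
    (hV : Module.rank K V = 2 ^ #K) :
    ∃ 𝓕 : Set V,
      (∀ a : K, a ≠ 0 → ∀ f ∈ 𝓕, a • f ∈ 𝓕) ∧
      (∀ G : Set V, #G < κ → ∃ φ : V, (fun g => φ + g) '' G ⊆ 𝓕) ∧
      (∃ I : Set V, #I = κ ∧ ∀ φ : V, ¬ (fun i => φ + i) '' I ⊆ 𝓕) ∧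
      ¬ ∃ W : Submodule K V, (W : Set V) ⊆ 𝓕 ∪ {0} ∧ Module.rank K W = 2 := by
  classical
  haveI : IsWellOrder (O κ) (· < ·) := isWellOrder_lt
  have hμ : ℵ₀ ≤ #K := Cardinal.infinite_iff.mp ‹Infinite K›
  have hμ0 : (#K) ≠ 0 := Cardinal.mk_ne_zero K
  -- cardinality of the index type Y κ
  have hO : #(O κ) = κ := by rw [Cardinal.mk_toType, Cardinal.card_ord]
  have hYle : #(Y κ) ≤ #K := by
    have hTag : #(Tag κ) ≤ #K := by
      have h1 : #(Tag κ) = κ * κ := by simp [Cardinal.mk_prod, hO]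
      rw [h1]
      exact (mul_le_mul' hκμ hκμ).trans (Cardinal.mul_eq_self hμ).le
    have hPair : #({q : Tag κ × Tag κ // q.1.1 ≠ q.2.1}) ≤ #K := by
      refine (Cardinal.mk_subtype_le _).trans ?_
      have h1 : #(Tag κ × Tag κ) = #(Tag κ) * #(Tag κ) := by simp [Cardinal.mk_prod]
      rw [h1]
      exact (mul_le_mul' hTag hTag).trans (Cardinal.mul_eq_self hμ).le
    have hX : #(X κ) ≤ #K := by
      have h1 : #(X κ) = #(Tag κ) + #({q : Tag κ × Tag κ // q.1.1 ≠ q.2.1}) := by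
        simp [Cardinal.mk_sum]
      rw [h1]
      exact (add_le_add hTag hPair).trans (Cardinal.add_eq_self hμ).le
    rw [Cardinal.mk_option]
    refine (add_le_add hX (le_trans ?_ hμ)).trans (Cardinal.add_eq_self hμ).le
    exact Cardinal.one_le_aleph0
  -- a basis of V and a surjection onto `Y κ → K`
  set ι := Module.Basis.ofVectorSpaceIndex K V with hι
  set b : Module.Basis ι K V := Module.Basis.ofVectorSpace K V with hb
  have hcard : #(Y κ → K) ≤ #ι := by
    have h1 : #(Y κ → K) = (#K) ^ (#(Y κ)) := (Cardinal.power_def _ _).symm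
    have h2 : (#K) ^ (#(Y κ)) ≤ (#K) ^ (#K) := Cardinal.power_le_power_left hμ0 hYle
    have h3 : (#K) ^ (#K) = 2 ^ (#K) := Cardinal.power_self_eq hμ
    rw [b.mk_eq_rank'', hV, ← h3]
    exact h1.le.trans h2
  obtain ⟨emb⟩ : Nonempty ((Y κ → K) ↪ ι) := Cardinal.le_def _ _ |>.mp hcard
  set σ : ι → (Y κ → K) := Function.invFun emb with hσ
  set π : V →ₗ[K] (Y κ → K) := b.constr K σ with hπ
  set s : (Y κ → K) → V := fun w => b (emb w) with hs
  have hsec : ∀ w, π (s w) = w := by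
    intro w
    rw [hs, hπ, Module.Basis.constr_basis]
    exact Function.leftInverse_invFun emb.injective w
  set 𝓕 : Set V := π ⁻¹' (Fbar κ K) with h𝓕
  refine ⟨𝓕, ?_, ?_, ?_, ?_⟩
  · -- star-like
    intro a ha f hf
    obtain ⟨h0, t, hti, hw⟩ := hf
    have hmap : π (a • f) = a • π f := map_smul π a f
    refine Set.mem_preimage.mpr ?_
    rw [hmap]
    refine ⟨?_, t, hti, ?_⟩
    · simpa using mul_ne_zero ha h0
    · intro x hx
      have := hw x hx
      simp only [Pi.smul_apply, smul_eq_mul, this]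
  · -- additivity lower bound: every small set has a translate inside 𝓕
    intro G hG
    set Gim : Set (Y κ → K) := π '' G with hGim
    have hGimκ : #Gim < κ := Cardinal.mk_image_le.trans_lt hG
    -- choose the value at `none`
    obtain ⟨tK, htK⟩ : ∃ tK : K, ∀ g ∈ G, tK + (π g) none ≠ 0 := by
      set Bad : Set K := (fun g => -((π g) none)) '' G with hBad
      have hBadlt : #Bad < #K := Cardinal.mk_image_le.trans_lt (hG.trans_le hκμ)
      have hne : Bad ≠ Set.univ := by
        intro h
        rw [h, Cardinal.mk_univ] at hBadlt
        exact lt_irrefl _ hBadlt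
      obtain ⟨tK, htK⟩ := Set.ne_univ_iff_exists_notMem _ |>.mp hne
      refine ⟨tK, fun g hg h0 => htK ⟨g, hg, ?_⟩⟩
      exact neg_eq_of_add_eq_zero_left h0
    -- choose a row with enough capacity
    have hξ : (#Gim).ord < Ordinal.type (α := O κ) (· < ·) := by
      rw [Ordinal.type_toType]
      exact Cardinal.ord_lt_ord.mpr hGimκ
    obtain ⟨r, hr⟩ := Ordinal.typein_surj (α := O κ) (· < ·) hξ
    have hcap : #(↥Gim) = #{i : O κ // i < r} := by
      rw [← Cardinal.card_ord (#Gim), ← hr]; rfl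
    obtain ⟨e⟩ : Nonempty (↥Gim ≃ {i : O κ // i < r}) := Cardinal.eq.mp hcap
    -- define the translating function
    set φbar : Y κ → K := fun y =>
      Option.elim y tK (fun x =>
        if h : ∃ w : ↥Gim, x ∈ A κ (r, (e w).val) then
          tK + (h.choose).val none - (h.choose).val (some x)
        else 0) with hφbar
    refine ⟨s φbar, ?_⟩
    rintro v ⟨g, hg, rfl⟩
    have hmem : π (s φbar + g) = φbar + π g := by rw [map_add, hsec]
    refine Set.mem_preimage.mpr ?_
    rw [hmem]
    set w₀ : ↥Gim := ⟨π g, Set.mem_image_of_mem π hg⟩ with hw₀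
    refine ⟨?_, (r, (e w₀).val), (e w₀).prop, ?_⟩
    · exact htK g hg
    · intro x hx
      have hpos : ∃ w : ↥Gim, x ∈ A κ (r, (e w).val) := ⟨w₀, hx⟩
      have hch : hpos.choose = w₀ := by
        have hspec := hpos.choose_spec
        have htag : ((r, (e hpos.choose).val) : Tag κ) = (r, (e w₀).val) :=
          A_eq_of_row_eq κ hspec hx rfl
        have : (e hpos.choose).val = (e w₀).val := congrArg Prod.snd htag
        exact e.injective (Subtype.ext this)
      have hval : φbar (some x) = tK + (π g) none - (π g) (some x) := by
        show Option.elim (some x) tK _ = _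
        simp only [Option.elim]
        rw [dif_pos hpos, hch]
      simp only [Pi.add_apply, hval]
      have hnone : φbar none = tK := rfl
      rw [hnone]
      ring
  · -- the blocking set of size κ
    obtain ⟨C, hC⟩ : ∃ C : Set K, #C = κ := Cardinal.le_mk_iff_exists_set.mp hκμ
    set ebar : Y κ → K := fun y => Option.elim y 1 (fun _ => 0) with hebar
    have hebarnone : ebar none = 1 := rfl
    have hebarsome : ∀ x, ebar (some x) = 0 := fun _ => rfl
    have hsinj : Function.Injective s := by
      intro w w' h
      have := congrArg π h
      rwa [hsec, hsec] at this
    have hinj : Function.Injective (fun c : K => s (c • ebar)) := by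
      intro c c' h
      have h2 : c • ebar = c' • ebar := hsinj h
      have := congrFun h2 none
      simpa [hebarnone] using this
    refine ⟨(fun c : K => s (c • ebar)) '' C, ?_, ?_⟩
    · rw [Cardinal.mk_image_eq hinj, hC]
    · intro φ hsub
      set t : K := (π φ) none with ht
      by_cases hneg : ∃ c ∈ C, t + c = 0
      · obtain ⟨c, hcC, hc0⟩ := hneg
        have hmem : φ + s (c • ebar) ∈ 𝓕 := hsub ⟨s (c • ebar), ⟨c, hcC, rfl⟩, rfl⟩
        have : π (φ + s (c • ebar)) ∈ Fbar κ K := hmem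
        rw [map_add, hsec] at this
        apply this.1
        show (π φ + c • ebar) none = 0
        simp only [Pi.add_apply, Pi.smul_apply, smul_eq_mul, hebarnone, mul_one]
        rw [← ht]
        exact hc0
      · push_neg at hneg
        have hCne : Nonempty (↥C) := by
          rw [← Cardinal.mk_ne_zero_iff, hC]
          intro h
          rw [h] at hκ3
          exact absurd hκ3 (by norm_num)
        have key : ∀ c : ↥C, ∃ tc : Tag κ, tc.2 < tc.1 ∧
            ∀ x ∈ A κ tc, (π φ) (some x) = t + c := by
          intro c
          have hmem : φ + s ((c : K) • ebar) ∈ 𝓕 := hsub ⟨s ((c : K) • ebar), ⟨c, c.prop, rfl⟩, rfl⟩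
          have hmem2 : π (φ + s ((c : K) • ebar)) ∈ Fbar κ K := hmem
          rw [map_add, hsec] at hmem2
          obtain ⟨h0, tc, htc, hwit⟩ := hmem2
          refine ⟨tc, htc, fun x hx => ?_⟩
          have := hwit x hx
          simpa [Pi.add_apply, hebarnone, hebarsome, ← ht] using this
        choose tg htg hw using key
        have hrow : ∀ c c' : ↥C, (tg c).1 = (tg c').1 := by
          intro c c'
          by_contra hne
          obtain ⟨x, hx, hx'⟩ := A_inter_nonempty κ hne
          have h1 := hw c x hx
          have h2 := hw c' x hx'
          have hval : (c : K) = (c' : K) := add_left_cancel (h1.symm.trans h2)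
          have hcc : c = c' := Subtype.ext hval
          rw [hcc] at hne
          exact hne rfl
        obtain ⟨c₀⟩ := hCne
        set r : O κ := (tg c₀).1 with hrdef
        have hΨinj : Function.Injective
            (fun c : ↥C => (⟨(tg c).2, Set.mem_Iio.mpr
              (by rw [hrdef, ← hrow c c₀]; exact htg c)⟩ : ↥(Set.Iio r))) := by
          intro c c' h
          have h2 : (tg c).2 = (tg c').2 := congrArg Subtype.val h
          have h1 : (tg c).1 = (tg c').1 := hrow c c'
          have htag : tg c = tg c' := Prod.ext h1 h2
          have hx : Sum.inl (tg c) ∈ A κ (tg c) := inl_mem_A κ (tg c)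
          have hx' : Sum.inl (tg c) ∈ A κ (tg c') := htag ▸ inl_mem_A κ (tg c)
          have e1 := hw c _ hx
          have e2 := hw c' _ hx'
          have : (c : K) = (c' : K) := add_left_cancel (e1.symm.trans e2)
          exact Subtype.ext this
        have hle : κ ≤ #(↥(Set.Iio r)) := by
          have h := Cardinal.mk_le_of_injective hΨinj
          rwa [hC] at h
        exact absurd hle (not_le.mpr (Cardinal.mk_Iio_ord_toType r))
  · -- not 2-lineable
    rintro ⟨W, hW, hrank⟩
    set L : V →ₗ[K] K := (LinearMap.proj (R := K) (φ := fun _ : Y κ => K) none).comp π with hL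
    set L' : ↥W →ₗ[K] K := L.comp W.subtype with hL'
    have hnotinj : ¬ Function.Injective L' := by
      intro hinjL
      have := LinearMap.rank_le_of_injective L' hinjL
      rw [hrank, Module.rank_self] at this
      exact absurd this (by norm_num)
    obtain ⟨x, y, hxy, hne⟩ := Function.not_injective_iff.mp hnotinj
    set w : ↥W := x - y with hwdef
    have hwne : w ≠ 0 := sub_ne_zero.mpr hne
    have hLw : L' w = 0 := by rw [map_sub, hxy, sub_self]
    have hwmem : (w : V) ∈ 𝓕 ∪ {0} := hW w.2
    rcases hwmem with hmem | hmem
    · have : π (w : V) ∈ Fbar κ K := hmem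
      apply this.1
      have : L' w = (π (w : V)) none := rfl
      rw [← this, hLw]
    · exact hwne (by simpa using hmem)
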